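/- Let N be large enough and let X_ℓ, X_r ⊆ {1,…,N} be disjoint subsets with ℓ ∈ X_ℓ and r ∈ X_r, where ℓ ≠ r. There do NOT exist self-adjoint operators A supported on X_ℓ and B supported on X_r such that (i/2)(n_ℓ − n_r)|W⟩ = (A + B)|W⟩. (Hence the boundary action of the truncated imaginary hopping on the W state cannot be realized by Hermitian boundary operators.) -/

import Mathlib

open scoped BigOperators

noncomputable section

/-- Configurations of `N` qubits. -/
abbrev Cfg (N : ℕ) := Fin N → Fin 2

/-- The `N`-qubit Hilbert space `⊗_{j=1}^N ℂ²`, identified with `ℂ^(Fin N → Fin 2)`. -/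
abbrev QS (N : ℕ) := EuclideanSpace ℂ (Cfg N)

/-- Computational basis state `|t⟩`. -/
def ket {N : ℕ} (t : Cfg N) : QS N := EuclideanSpace.single t 1

/-- Configuration with a single `1` at site `j`. -/
def eConf {N : ℕ} (j : Fin N) : Cfg N := fun k => if k = j then 1 else 0

/-- The all-zero product state `|0̄⟩`. -/
def zeroKet (N : ℕ) : QS N := ket (fun _ => 0)

/-- The W state `|W⟩ = (1/√N) ∑_j |e_j⟩`. -/
def Wst (N : ℕ) : QS N := (Real.sqrt N : ℂ)⁻¹ • ∑ j : Fin N, ket (eConf j)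

/-- Hilbert space of the qubits in a subregion `A ⊆ {1,…,N}`. -/
abbrev QSOn {N : ℕ} (A : Finset (Fin N)) := EuclideanSpace ℂ (↥A → Fin 2)

/-- Computational basis state on subregion `A`. -/
def ketOn {N : ℕ} (A : Finset (Fin N)) (t : ↥A → Fin 2) : QSOn A := EuclideanSpace.single t 1

/-- All-zero state `|0̄⟩_A` on subregion `A`. -/
def zeroOn {N : ℕ} (A : Finset (Fin N)) : QSOn A := ketOn A (fun _ => 0)

/-- W state `|W⟩_A = (1/√|A|) ∑_{j∈A} |e_j⟩_A` on subregion `A`. -/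
def WOn {N : ℕ} (A : Finset (Fin N)) : QSOn A :=
  (Real.sqrt A.card : ℂ)⁻¹ • ∑ j : ↥A, ketOn A (fun k => if k = j then 1 else 0)

/-- Tensor product of a state on `X` with a state on `Xᶜ`, realized in the full `N`-qubit
space via the factorization of basis configurations. -/
def tens {N : ℕ} (X : Finset (Fin N)) (f : QSOn X) (g : QSOn Xᶜ) : QS N :=
  WithLp.toLp 2 (fun (s : Cfg N) => f (fun j => s j.1) * g (fun j => s j.1))

/-- Combine a configuration on `X` and one on `Xᶜ` into a full configuration. -/
def mergeCfg {N : ℕ} (X : Finset (Fin N)) (x : ↥X → Fin 2) (y : ↥(Xᶜ) → Fin 2) : Cfg N :=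
  fun k => if h : k ∈ X then x ⟨k, h⟩ else y ⟨k, Finset.mem_compl.mpr h⟩

/-- Hard-core boson creation operator `s_j† = |1⟩⟨0|` acting at site `j`. -/
def aDag {N : ℕ} (j : Fin N) : QS N →ₗ[ℂ] QS N where
  toFun ψ := WithLp.toLp 2 (fun s => if s j = 1 then ψ (Function.update s j 0) else 0)
  map_add' ψ φ := by apply PiLp.ext; intro s; by_cases h : s j = 1 <;> simp [h]
  map_smul' c ψ := by apply PiLp.ext; intro s; by_cases h : s j = 1 <;> simp [h]

/-- Hard-core boson annihilation operator `s_j = |0⟩⟨1|` acting at site `j`. -/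
def aOp {N : ℕ} (j : Fin N) : QS N →ₗ[ℂ] QS N where
  toFun ψ := WithLp.toLp 2 (fun s => if s j = 0 then ψ (Function.update s j 1) else 0)
  map_add' ψ φ := by apply PiLp.ext; intro s; by_cases h : s j = 0 <;> simp [h]
  map_smul' c ψ := by apply PiLp.ext; intro s; by_cases h : s j = 0 <;> simp [h]

/-- Number operator `n_j = s_j† s_j = |1⟩⟨1|_j`. -/
def nOp {N : ℕ} (j : Fin N) : QS N →ₗ[ℂ] QS N := aDag j ∘ₗ aOp j

/-- The imaginary-hopping Hamiltonian
`H_ImHop = (i/2) ∑_{j=1}^N (s_j† s_{j+1} − s_{j+1}† s_j)` on the periodic chain. -/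
def HImHop (N : ℕ) [NeZero N] : QS N →ₗ[ℂ] QS N :=
  (Complex.I / 2) • ∑ j : Fin N, (aDag j ∘ₗ aOp (j + 1) - aDag (j + 1) ∘ₗ aOp j)

/-- `g` is supported on `X`: it acts as `gX ⊗ Id_{Xᶜ}` for some operator `gX` on `H_X`. -/
def SupportedOn {N : ℕ} (X : Finset (Fin N)) (g : QS N →ₗ[ℂ] QS N) : Prop :=
  ∃ gX : QSOn X →ₗ[ℂ] QSOn X, ∀ (ψ : QS N) (s : Cfg N),
    g ψ s
      = gX (WithLp.toLp 2 (fun x : ↥X → Fin 2 => ψ (mergeCfg X x (fun j : ↥(Xᶜ) => s j.1))))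
          (fun j : ↥X => s j.1)

namespace NoHermAux

local notation "⟪" x ", " y "⟫" => @inner ℂ _ _ x y

variable {N : ℕ}

lemma eConf_injective : Function.Injective (eConf (N := N)) := by
  intro j k h
  by_contra hne
  have h2 := congrFun h j
  simp [eConf, hne] at h2

lemma ket_apply (t s : Cfg N) : ket t s = if s = t then (1:ℂ) else 0 :=
  EuclideanSpace.single_apply t 1 s

lemma sum_ket_apply (X : Finset (Fin N)) (s : Cfg N) :
    (∑ j ∈ X, ket (eConf j)) s = ∑ j ∈ X, if s = eConf j then (1:ℂ) else 0 := by
  rw [show ((∑ j ∈ X, ket (eConf j)) s) = ∑ j ∈ X, ket (eConf j) s from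
    by rw [WithLp.ofLp_sum, Finset.sum_apply]]
  exact Finset.sum_congr rfl fun j _ => ket_apply _ _

lemma smul_apply' (c : ℂ) (v : QS N) (s : Cfg N) : (c • v) s = c * v s := rfl

lemma sum_ite_eConf (t : Cfg N) :
    ∑ k : Fin N, (if t = eConf k then (1:ℂ) else 0)
      = if ∃ k, t = eConf k then 1 else 0 := by
  by_cases h : ∃ k, t = eConf k
  · obtain ⟨k0, rfl⟩ := h
    rw [if_pos ⟨k0, rfl⟩, Finset.sum_eq_single k0]
    · simp
    · intro k _ hk
      exact if_neg fun h => hk (eConf_injective h).symm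
    · simp
  · rw [if_neg h, Finset.sum_eq_zero fun k _ => if_neg fun hk => h ⟨k, hk⟩]

lemma Wst_apply (s : Cfg N) :
    Wst N s = (Real.sqrt N : ℂ)⁻¹ * (if ∃ k, s = eConf k then 1 else 0) := by
  rw [Wst, smul_apply', show ((∑ j : Fin N, ket (eConf j)) s)
      = ∑ j : Fin N, ket (eConf j) s from by rw [WithLp.ofLp_sum, Finset.sum_apply]]
  congr 1
  rw [← sum_ite_eConf]
  exact Finset.sum_congr rfl fun j _ => ket_apply _ _

lemma nOp_apply (j : Fin N) (ψ : QS N) (s : Cfg N) :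
    nOp j ψ s = if s j = 1 then ψ s else 0 := by
  show (if s j = 1 then (if Function.update s j 0 j = 0
      then ψ (Function.update (Function.update s j 0) j 1) else 0) else 0) = _
  by_cases h : s j = 1
  · rw [if_pos h, if_pos h, if_pos (by simp), Function.update_idem]
    refine congrArg (WithLp.ofLp ψ) ?_
    rw [← h, Function.update_eq_self]
  · rw [if_neg h, if_neg h]

lemma inner_sum_ket (X : Finset (Fin N)) (v : QS N) :
    ⟪∑ j ∈ X, ket (eConf j), v⟫ = ∑ j ∈ X, v (eConf j) := by
  rw [sum_inner]
  refine Finset.sum_congr rfl fun j _ => ?_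
  rw [ket, EuclideanSpace.inner_single_left]
  simp

lemma inner_ket (t : Cfg N) (v : QS N) : ⟪ket t, v⟫ = v t := by
  rw [ket, EuclideanSpace.inner_single_left]
  simp

lemma im_inner_self (A : QS N →ₗ[ℂ] QS N) (hA : IsSelfAdjoint A) (x : QS N) :
    (⟪x, A x⟫).im = 0 := by
  have hs : A.IsSymmetric := (LinearMap.isSymmetric_iff_isSelfAdjoint A).mpr hA
  have h1 : (starRingEnd ℂ) ⟪x, A x⟫ = ⟪x, A x⟫ := by
    rw [inner_conj_symm]; exact hs x x
  exact Complex.conj_eq_iff_im.mp h1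





lemma sum_mem_ite (X : Finset (Fin N)) (x : ↥X → Fin 2) :
    ∑ k ∈ X, (if mergeCfg X x (fun _ => 0) = eConf k then (1:ℂ) else 0)
      = ∑ k : Fin N, (if mergeCfg X x (fun _ => 0) = eConf k then (1:ℂ) else 0) := by
  apply Finset.sum_subset (Finset.subset_univ X)
  intro k _ hk
  rw [if_neg]
  intro h
  have h2 := congrFun h k
  simp [mergeCfg, eConf, hk] at h2

lemma merge_zero_eq_zero_iff (X : Finset (Fin N)) (x : ↥X → Fin 2) :
    mergeCfg X x (fun _ => 0) = (fun _ => (0:Fin 2)) ↔ x = fun _ => 0 := by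
  constructor
  · intro h
    funext i
    have h2 := congrFun h i.1
    simpa [mergeCfg, i.2] using h2
  · intro h
    subst h
    funext k
    simp [mergeCfg]

lemma exists_eConf_merge_iff (X : Finset (Fin N)) {j : Fin N} (hj : j ∉ X) (x : ↥X → Fin 2) :
    (∃ k, mergeCfg X x (fun i : ↥(Xᶜ) => eConf j i.1) = eConf k) ↔ x = fun _ => 0 := by
  constructor
  · rintro ⟨k, hk⟩
    have hjk : k = j := by
      by_contra hne
      have h1 := congrFun hk j
      have hne' : j ≠ k := fun h => hne h.symm
      simp [mergeCfg, eConf, hj, hne'] at h1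
    subst hjk
    funext i
    have h2 := congrFun hk i.1
    have hij : i.1 ≠ k := fun h => hj (h ▸ i.2)
    simpa [mergeCfg, i.2, eConf, hij] using h2
  · intro h
    subst h
    refine ⟨j, funext fun k => ?_⟩
    by_cases hk : k ∈ X
    · have hkj : k ≠ j := fun h => hj (h ▸ hk)
      simp [mergeCfg, hk, eConf, hkj]
    · simp [mergeCfg, hk, eConf]

end NoHermAux
/-- For disjoint boundary regions `X_ℓ ∋ ℓ` and `X_r ∋ r` (`ℓ ≠ r`), there do
NOT exist self-adjoint operators `A` supported on `X_ℓ` and `B` supported on `X_r` with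
`(i/2)(n_ℓ − n_r)|W⟩ = (A + B)|W⟩`. -/
theorem no_hermitian_boundary_action_for_HImHop (N : ℕ) (hN : 2 ≤ N)
    (Xl Xr : Finset (Fin N)) (hdisj : Disjoint Xl Xr)
    (ℓ r : Fin N) (hl : ℓ ∈ Xl) (hr : r ∈ Xr) (hlr : ℓ ≠ r) :
    ¬ ∃ A B : QS N →ₗ[ℂ] QS N,
        IsSelfAdjoint A ∧ SupportedOn Xl A ∧ IsSelfAdjoint B ∧ SupportedOn Xr B ∧
        ((Complex.I / 2) • (nOp ℓ - nOp r)) (Wst N) = (A + B) (Wst N) := by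
  rintro ⟨A, B, hAsa, ⟨gA, hgA⟩, hBsa, ⟨gB, hgB⟩, heq⟩
  classical
  have hrXl : r ∉ Xl := fun h => Finset.disjoint_left.mp hdisj h hr
  have hNpos : (0:ℝ) < N := by positivity
  have hsqrt_pos : 0 < Real.sqrt N := Real.sqrt_pos.mpr hNpos
  have hsqrt_ne : (Real.sqrt N : ℂ) ≠ 0 := by
    exact_mod_cast Complex.ofReal_ne_zero.mpr (ne_of_gt hsqrt_pos)
  set φ : QS N := ∑ j ∈ Xl, ket (eConf j) with hφ
  -- A-side key
  have hXlc : ∀ j : Fin N, j ∈ Xl →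
      (fun i : ↥(Xlᶜ) => eConf j i.1) = (fun _ => (0 : Fin 2)) := by
    intro j hj
    funext i
    have hij : i.1 ≠ j := fun h => (Finset.mem_compl.mp i.2) (h ▸ hj)
    simp [eConf, hij]
  have hWmergeA : ∀ x : ↥Xl → Fin 2,
      φ (mergeCfg Xl x (fun _ => 0))
        = (Real.sqrt N : ℂ) * Wst N (mergeCfg Xl x (fun _ => 0)) := by
    intro x
    rw [hφ, NoHermAux.sum_ket_apply, NoHermAux.Wst_apply, NoHermAux.sum_mem_ite,
      NoHermAux.sum_ite_eConf, ← mul_assoc, mul_inv_cancel₀ hsqrt_ne, one_mul]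
  have hA0 : ∀ j ∈ Xl, A φ (eConf j) = (Real.sqrt N : ℂ) * A (Wst N) (eConf j) := by
    intro j hj
    rw [hgA φ (eConf j), hgA (Wst N) (eConf j)]
    have key : WithLp.toLp 2 (fun x : ↥Xl → Fin 2 => φ (mergeCfg Xl x (fun i : ↥(Xlᶜ) => eConf j i.1)))
        = ((Real.sqrt N : ℂ) •
            WithLp.toLp 2 (fun x : ↥Xl → Fin 2 => Wst N (mergeCfg Xl x (fun i : ↥(Xlᶜ) => eConf j i.1)))
            : QSOn Xl) := by
      apply PiLp.ext; intro x
      show φ _ = (Real.sqrt N : ℂ) * Wst N _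
      rw [hXlc j hj]
      exact hWmergeA x
    rw [key, map_smul]
    rfl
  -- B-side key
  have hBj : ∀ j ∈ Xl, B (Wst N) (eConf j)
      = (Real.sqrt N : ℂ)⁻¹ * B (zeroKet N) (fun _ => 0) := by
    intro j hj
    have hjXr : j ∉ Xr := fun h => Finset.disjoint_left.mp hdisj hj h
    rw [hgB (Wst N) (eConf j), hgB (zeroKet N) (fun _ => 0)]
    have hrestr : (fun i : ↥Xr => eConf j i.1)
        = (fun i : ↥Xr => (fun _ : Fin N => (0:Fin 2)) i.1) := by
      funext i
      have hij : i.1 ≠ j := fun h => hjXr (h ▸ i.2)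
      simp [eConf, hij]
    rw [hrestr]
    have key : WithLp.toLp 2 (fun x : ↥Xr → Fin 2 => Wst N (mergeCfg Xr x (fun i : ↥(Xrᶜ) => eConf j i.1)))
        = ((Real.sqrt N : ℂ)⁻¹ •
            WithLp.toLp 2 (fun x : ↥Xr → Fin 2 =>
              zeroKet N (mergeCfg Xr x (fun i : ↥(Xrᶜ) => (fun _ : Fin N => (0:Fin 2)) i.1)))
            : QSOn Xr) := by
      apply PiLp.ext; intro x
      show Wst N _ = (Real.sqrt N : ℂ)⁻¹ * zeroKet N _
      have hy0 : (fun i : ↥(Xrᶜ) => (fun _ : Fin N => (0:Fin 2)) i.1)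
          = (fun _ : ↥(Xrᶜ) => (0:Fin 2)) := rfl
      rw [hy0, NoHermAux.Wst_apply, zeroKet, NoHermAux.ket_apply]
      congr 1
      exact if_congr ((NoHermAux.exists_eConf_merge_iff Xr hjXr x).trans
        (NoHermAux.merge_zero_eq_zero_iff Xr x).symm) rfl rfl
    rw [key, map_smul]
    rfl
  -- LHS evaluation
  have hW : ∀ j : Fin N, Wst N (eConf j) = (Real.sqrt N : ℂ)⁻¹ := by
    intro j
    rw [NoHermAux.Wst_apply, if_pos ⟨j, rfl⟩, mul_one]
  have hterm : ∀ j ∈ Xl, ((Complex.I / 2) • (nOp ℓ - nOp r)) (Wst N) (eConf j)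
      = if ℓ = j then Complex.I / 2 * (Real.sqrt N : ℂ)⁻¹ else 0 := by
    intro j hj
    have hrj : r ≠ j := fun h => hrXl (h ▸ hj)
    have e2 : eConf j r ≠ 1 := by simp [eConf, hrj]
    show Complex.I / 2 * (nOp ℓ (Wst N) (eConf j) - nOp r (Wst N) (eConf j)) = _
    rw [NoHermAux.nOp_apply, NoHermAux.nOp_apply, if_neg e2, sub_zero, hW]
    by_cases h : ℓ = j
    · rw [if_pos (show eConf j ℓ = 1 by simp [eConf, h]), if_pos h]
    · rw [if_neg (show eConf j ℓ ≠ 1 by simp [eConf, h]), if_neg h, mul_zero]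
  have hLlhs : ∑ j ∈ Xl, ((Complex.I / 2) • (nOp ℓ - nOp r)) (Wst N) (eConf j)
      = Complex.I / 2 * (Real.sqrt N : ℂ)⁻¹ := by
    rw [Finset.sum_congr rfl hterm, Finset.sum_ite_eq Xl ℓ
      (fun _ => Complex.I / 2 * (Real.sqrt N : ℂ)⁻¹), if_pos hl]
  -- RHS evaluation
  have hLA : ∑ j ∈ Xl, A (Wst N) (eConf j)
      = (Real.sqrt N : ℂ)⁻¹ * (@inner ℂ _ _ φ (A φ)) := by
    rw [hφ, NoHermAux.inner_sum_ket, Finset.mul_sum]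
    refine Finset.sum_congr rfl fun j hj => ?_
    rw [← hφ, hA0 j hj, ← mul_assoc, inv_mul_cancel₀ hsqrt_ne, one_mul]
  have hLB : ∑ j ∈ Xl, B (Wst N) (eConf j)
      = (Xl.card : ℂ) * ((Real.sqrt N : ℂ)⁻¹ * (@inner ℂ _ _ (zeroKet N) (B (zeroKet N)))) := by
    rw [Finset.sum_congr rfl hBj, Finset.sum_const, nsmul_eq_mul]
    congr 2
    exact (NoHermAux.inner_ket (fun _ => 0) (B (zeroKet N))).symm
  have hsum : Complex.I / 2 * (Real.sqrt N : ℂ)⁻¹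
      = (Real.sqrt N : ℂ)⁻¹ * (@inner ℂ _ _ φ (A φ))
        + (Xl.card : ℂ) * ((Real.sqrt N : ℂ)⁻¹ * (@inner ℂ _ _ (zeroKet N) (B (zeroKet N)))) := by
    rw [← hLlhs, ← hLA, ← hLB, ← Finset.sum_add_distrib]
    rw [heq]
    exact Finset.sum_congr rfl fun j _ => rfl
  -- take imaginary parts
  have himA := NoHermAux.im_inner_self A hAsa φ
  have himB := NoHermAux.im_inner_self B hBsa (zeroKet N)
  rw [← Complex.ofReal_inv] at hsum
  have him := congrArg Complex.im hsum
  have e1 : (Complex.I / 2 * (((Real.sqrt N)⁻¹ : ℝ) : ℂ)).im = (Real.sqrt N)⁻¹ / 2 := by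
    rw [mul_comm, Complex.im_ofReal_mul]
    norm_num [Complex.div_im]
    ring
  rw [e1, Complex.add_im, Complex.im_ofReal_mul, himA, Complex.mul_im,
    Complex.im_ofReal_mul, himB] at him
  simp at him
  omega
end
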